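/- Let y = Φx + v with x K-sparse with support T, let Λ be a K-element index set, and let x̂_Λ = Φ_Λ† y be the least-squares estimate supported on Λ (extended by zeros outside Λ). Then ‖x − x̂_Λ‖₂ ≤ ((1 − δ_K + 2δ_{2K})‖x_{T∖Λ}‖₂ + (1−δ_K)‖v‖₂) / ((1 − δ_K)√(1 − δ_{2K})). -/

import Mathlib

open Matrix Finset

noncomputable def l2 {n : Type*} [Fintype n] (x : n → ℝ) : ℝ :=
  Real.sqrt (∑ i, (x i) ^ 2)

def Sparse {N : ℕ} (K : ℕ) (x : Fin N → ℝ) : Prop :=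
  (Finset.univ.filter (fun i => x i ≠ 0)).card ≤ K

def RIP {M N : ℕ} (Φ : Matrix (Fin M) (Fin N) ℝ) (K : ℕ) (δ : ℝ) : Prop :=
  ∀ x : Fin N → ℝ, Sparse K x →
    (1 - δ) * (l2 x) ^ 2 ≤ (l2 (Φ.mulVec x)) ^ 2 ∧
    (l2 (Φ.mulVec x)) ^ 2 ≤ (1 + δ) * (l2 x) ^ 2

def colSub {M N : ℕ} (Φ : Matrix (Fin M) (Fin N) ℝ) (S : Finset (Fin N)) :
    Matrix (Fin M) {i // i ∈ S} ℝ := fun r c => Φ r c.1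

noncomputable def resid {M N : ℕ} (Φ : Matrix (Fin M) (Fin N) ℝ) (S : Finset (Fin N))
    (y : Fin M → ℝ) : Fin M → ℝ :=
  y - (colSub Φ S).mulVec
    ((((colSub Φ S)ᵀ * colSub Φ S)⁻¹).mulVec ((colSub Φ S)ᵀ.mulVec y))

def restr {N : ℕ} (x : Fin N → ℝ) (S : Finset (Fin N)) : {i // i ∈ S} → ℝ :=
  fun i => x i.1

noncomputable def lsEst {M N : ℕ} (Φ : Matrix (Fin M) (Fin N) ℝ)
    (Λ : Finset (Fin N)) (y : Fin M → ℝ) : Fin N → ℝ :=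
  fun i =>
    if h : i ∈ Λ then
      ((((colSub Φ Λ)ᵀ * colSub Φ Λ)⁻¹).mulVec ((colSub Φ Λ)ᵀ.mulVec y)) ⟨i, h⟩
    else 0

/- ## Auxiliary lemmas -/

lemma l2_nonneg {n : Type*} [Fintype n] (x : n → ℝ) : 0 ≤ l2 x := Real.sqrt_nonneg _

lemma l2_sq' {n : Type*} [Fintype n] (x : n → ℝ) : l2 x ^ 2 = x ⬝ᵥ x := by
  rw [l2, Real.sq_sqrt (by positivity)]
  simp [dotProduct, sq]

lemma dot_self_nonneg {n : Type*} [Fintype n] (x : n → ℝ) : 0 ≤ x ⬝ᵥ x :=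
  Finset.sum_nonneg fun i _ => mul_self_nonneg _

lemma l2_mono {n : Type*} [Fintype n] {x y : n → ℝ} (h : x ⬝ᵥ x ≤ y ⬝ᵥ y) : l2 x ≤ l2 y := by
  apply Real.sqrt_le_sqrt
  simpa [dotProduct, sq] using h

lemma dot_le_l2 {n : Type*} [Fintype n] (x y : n → ℝ) : x ⬝ᵥ y ≤ l2 x * l2 y := by
  have h := Finset.sum_mul_sq_le_sq_mul_sq univ x y
  have h2 : (x ⬝ᵥ y) ^ 2 ≤ (l2 x * l2 y) ^ 2 := by
    rw [mul_pow, l2_sq', l2_sq']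
    simpa [dotProduct, sq] using h
  nlinarith [mul_nonneg (l2_nonneg x) (l2_nonneg y), le_abs_self (x ⬝ᵥ y), sq_abs (x ⬝ᵥ y)]

lemma l2_triangle {n : Type*} [Fintype n] (x y : n → ℝ) : l2 (x + y) ≤ l2 x + l2 y := by
  have hd := dot_le_l2 x y
  have h : (x + y) ⬝ᵥ (x + y) ≤ (l2 x + l2 y) ^ 2 := by
    have hx := l2_sq' x; have hy := l2_sq' y
    rw [add_dotProduct, dotProduct_add, dotProduct_add, dotProduct_comm y x]
    nlinarith [l2_nonneg x, l2_nonneg y]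
  have h2 : l2 (x + y) ^ 2 ≤ (l2 x + l2 y) ^ 2 := by rw [l2_sq']; exact h
  nlinarith [l2_nonneg (x + y), l2_nonneg x, l2_nonneg y]

lemma l2_neg {n : Type*} [Fintype n] (x : n → ℝ) : l2 (-x) = l2 x := by
  unfold l2; simp

lemma l2_pos_sq {n : Type*} [Fintype n] {x : n → ℝ} (h : x ≠ 0) : 0 < x ⬝ᵥ x := by
  obtain ⟨i, hi⟩ : ∃ i, x i ≠ 0 := by
    by_contra hc; push_neg at hc; exact h (funext hc)
  exact Finset.sum_pos' (fun j _ => mul_self_nonneg _)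
    ⟨i, Finset.mem_univ i, mul_self_pos.mpr hi⟩

def extd {N : ℕ} (S : Finset (Fin N)) (c : {i // i ∈ S} → ℝ) : Fin N → ℝ :=
  fun i => if h : i ∈ S then c ⟨i, h⟩ else 0

lemma extd_sum {N : ℕ} (S : Finset (Fin N)) (c : {i // i ∈ S} → ℝ) (f : Fin N → ℝ → ℝ)
    (hf : ∀ i, f i 0 = 0) : ∑ i, f i (extd S c i) = ∑ i : {i // i ∈ S}, f i.1 (c i) := by
  rw [← Finset.sum_subset (Finset.subset_univ S) (by intro i _ hi; simp [extd, hi, hf])]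
  rw [← Finset.sum_attach S (fun i => f i (extd S c i))]
  rw [Finset.univ_eq_attach]
  apply Finset.sum_congr rfl
  intro i _; simp [extd, i.2]

lemma mulVec_extd {M N : ℕ} (Φ : Matrix (Fin M) (Fin N) ℝ) (S : Finset (Fin N))
    (c : {i // i ∈ S} → ℝ) : Φ.mulVec (extd S c) = (colSub Φ S).mulVec c := by
  funext r
  simpa [mulVec, dotProduct, colSub] using extd_sum S c (fun i t => Φ r i * t) (by simp)

lemma l2_extd {N : ℕ} (S : Finset (Fin N)) (c : {i // i ∈ S} → ℝ) :
    l2 (extd S c) = l2 c := by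
  unfold l2
  rw [extd_sum S c (fun _ t => t ^ 2) (by simp)]

lemma sparse_extd {N : ℕ} (S : Finset (Fin N)) (c : {i // i ∈ S} → ℝ) :
    Sparse S.card (extd S c) := by
  apply Finset.card_le_card
  intro i hi
  simp only [mem_filter, mem_univ, true_and, extd] at hi
  by_contra h
  simp [h] at hi

lemma extd_restr {N : ℕ} (x : Fin N → ℝ) (S : Finset (Fin N)) (h : ∀ i, i ∉ S → x i = 0) :
    extd S (restr x S) = x := by
  funext i
  by_cases hi : i ∈ S <;> simp [extd, restr, hi, h]

lemma l2_restr_of_supp {N : ℕ} (x : Fin N → ℝ) (S : Finset (Fin N)) (h : ∀ i, i ∉ S → x i = 0) :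
    l2 x = l2 (restr x S) := by
  rw [← extd_restr x S h, l2_extd, extd_restr x S h]

lemma adjoint_dot {m n : Type*} [Fintype m] [Fintype n] (A : Matrix m n ℝ)
    (a : n → ℝ) (w : m → ℝ) :
    a ⬝ᵥ Aᵀ.mulVec w = (A.mulVec a) ⬝ᵥ w := by
  rw [Matrix.dotProduct_mulVec, Matrix.vecMul_transpose]

set_option maxHeartbeats 1000000 in
theorem ls_estimate_error {M N K : ℕ} (Φ : Matrix (Fin M) (Fin N) ℝ)
    (x : Fin N → ℝ) (T Λ : Finset (Fin N)) (v y : Fin M → ℝ)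
    (hy : y = Φ.mulVec x + v) (hT : T.card = K)
    (hsupp : ∀ i, i ∉ T → x i = 0) (hΛcard : Λ.card = K)
    (δK δ2K : ℝ) (hδK0 : 0 ≤ δK) (hle : δK ≤ δ2K) (hδ2K1 : δ2K < 1)
    (hRIPK : RIP Φ K δK) (hRIP2K : RIP Φ (2 * K) δ2K) :
    l2 (x - lsEst Φ Λ y) ≤
      ((1 - δK + 2 * δ2K) * l2 (restr x (T \ Λ)) + (1 - δK) * l2 v) /
        ((1 - δK) * Real.sqrt (1 - δ2K)) := by
  have hδK1 : δK < 1 := lt_of_le_of_lt hle hδ2K1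
  have hδ2K0 : 0 ≤ δ2K := le_trans hδK0 hle
  set A := colSub Φ Λ with hA
  set G := Aᵀ * A with hG
  -- RIP on Λ-supported vectors
  have hKΛ : ∀ c : {i // i ∈ Λ} → ℝ, (1 - δK) * l2 c ^ 2 ≤ l2 (A.mulVec c) ^ 2 := by
    intro c
    have hs : Sparse K (extd Λ c) := by rw [← hΛcard]; exact sparse_extd Λ c
    have := (hRIPK (extd Λ c) hs).1
    rwa [l2_extd, mulVec_extd] at this
  have hAtA : ∀ a b : {i // i ∈ Λ} → ℝ, (A.mulVec a) ⬝ᵥ (A.mulVec b) = a ⬝ᵥ (G.mulVec b) := by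
    intro a b
    rw [← adjoint_dot, Matrix.mulVec_mulVec, hG]
  -- G is invertible
  have hPD : G.PosDef := by
    rw [Matrix.posDef_iff_dotProduct_mulVec]
    constructor
    · rw [Matrix.IsHermitian, hG]
      rw [Matrix.conjTranspose_eq_transpose_of_trivial, Matrix.transpose_mul,
        Matrix.transpose_transpose]
    · intro c hc
      have h1 : (1 - δK) * l2 c ^ 2 ≤ l2 (A.mulVec c) ^ 2 := hKΛ c
      have h2 : 0 < c ⬝ᵥ c := l2_pos_sq hc
      have h3 : (A.mulVec c) ⬝ᵥ (A.mulVec c) = c ⬝ᵥ G.mulVec c := hAtA c c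
      rw [l2_sq', l2_sq', h3] at h1
      simpa using lt_of_lt_of_le (by nlinarith) h1
  have hdet : IsUnit G.det := isUnit_iff_ne_zero.mpr (ne_of_gt hPD.det_pos)
  have hGG : G * G⁻¹ = 1 := Matrix.mul_nonsing_inv _ hdet
  have hGG' : G⁻¹ * G = 1 := Matrix.nonsing_inv_mul _ hdet
  -- the projection operator
  set Pm : (Fin M → ℝ) → Fin M → ℝ := fun u => A.mulVec (G⁻¹.mulVec (Aᵀ.mulVec u)) with hPm
  have hGc : ∀ c : {i // i ∈ Λ} → ℝ, G.mulVec (G⁻¹.mulVec c) = c := by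
    intro c
    rw [Matrix.mulVec_mulVec, hGG, Matrix.one_mulVec]
  have hGc' : ∀ c : {i // i ∈ Λ} → ℝ, G⁻¹.mulVec (G.mulVec c) = c := by
    intro c
    rw [Matrix.mulVec_mulVec, hGG', Matrix.one_mulVec]
  have hPdot : ∀ u w, (Pm u) ⬝ᵥ (Pm w) = (Pm u) ⬝ᵥ w := by
    intro u w
    show (A.mulVec (G⁻¹.mulVec (Aᵀ.mulVec u))) ⬝ᵥ (A.mulVec (G⁻¹.mulVec (Aᵀ.mulVec w)))
      = (A.mulVec (G⁻¹.mulVec (Aᵀ.mulVec u))) ⬝ᵥ w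
    rw [hAtA, hGc, adjoint_dot]
  have hPle : ∀ u, l2 (Pm u) ≤ l2 u := by
    intro u
    apply l2_mono
    have h1 := hPdot u u
    have h2 : 0 ≤ (u - Pm u) ⬝ᵥ (u - Pm u) := dot_self_nonneg _
    have h3 : (u - Pm u) ⬝ᵥ (u - Pm u)
        = u ⬝ᵥ u - u ⬝ᵥ Pm u - (Pm u ⬝ᵥ u - Pm u ⬝ᵥ Pm u) := by
      rw [sub_dotProduct, dotProduct_sub, dotProduct_sub]
    have h4 : u ⬝ᵥ Pm u = Pm u ⬝ᵥ u := dotProduct_comm _ _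
    linarith
  have hP'le : ∀ u, l2 (u - Pm u) ≤ l2 u := by
    intro u
    apply l2_mono
    have h1 := hPdot u u
    have h3 : (u - Pm u) ⬝ᵥ (u - Pm u)
        = u ⬝ᵥ u - u ⬝ᵥ Pm u - (Pm u ⬝ᵥ u - Pm u ⬝ᵥ Pm u) := by
      rw [sub_dotProduct, dotProduct_sub, dotProduct_sub]
    have h4 : u ⬝ᵥ Pm u = Pm u ⬝ᵥ u := dotProduct_comm _ _
    have h5 : 0 ≤ (Pm u) ⬝ᵥ (Pm u) := dot_self_nonneg _
    linarith
  have hAG : ∀ c : {i // i ∈ Λ} → ℝ, Aᵀ.mulVec (A.mulVec c) = G.mulVec c := by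
    intro c
    rw [Matrix.mulVec_mulVec, hG]
  have hPfix : ∀ c : {i // i ∈ Λ} → ℝ, Pm (A.mulVec c) = A.mulVec c := by
    intro c
    show A.mulVec (G⁻¹.mulVec (Aᵀ.mulVec (A.mulVec c))) = A.mulVec c
    rw [hAG, hGc']
  have hPadd : ∀ u w, Pm (u + w) = Pm u + Pm w := by
    intro u w
    rw [hPm]; simp only [Matrix.mulVec_add]
  -- the estimate
  set z := G⁻¹.mulVec (Aᵀ.mulVec y) with hz
  have hxhat : lsEst Φ Λ y = extd Λ z := rfl
  have hΦxhat : Φ.mulVec (lsEst Φ Λ y) = Pm y := by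
    rw [hxhat, mulVec_extd]
  -- decomposition of x
  set x1 := extd Λ (restr x Λ) with hx1
  set x2 := x - x1 with hx2
  have hx2supp : ∀ i, i ∉ T \ Λ → x2 i = 0 := by
    intro i hi
    by_cases hΛi : i ∈ Λ
    · simp [hx2, hx1, extd, restr, hΛi]
    · have hTi : i ∉ T := fun hT' => hi (Finset.mem_sdiff.mpr ⟨hT', hΛi⟩)
      simp [hx2, hx1, extd, restr, hΛi, hsupp i hTi]
  have hΦx1fix : Pm (Φ.mulVec x1) = Φ.mulVec x1 := by
    rw [hx1, mulVec_extd]; exact hPfix _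
  -- decomposition of the error image
  have hxsum : x = x1 + x2 := by rw [hx2]; abel
  have hΦx : Φ.mulVec x = Φ.mulVec x1 + Φ.mulVec x2 := by
    nth_rewrite 1 [hxsum]
    rw [Matrix.mulVec_add]
  have hdecomp : Φ.mulVec (x - lsEst Φ Λ y)
      = (Φ.mulVec x2 - Pm (Φ.mulVec x2)) + -(Pm v) := by
    rw [Matrix.mulVec_sub, hΦxhat, hy, hPadd, hΦx, hPadd, hΦx1fix]
    abel
  have hΦe_le : l2 (Φ.mulVec (x - lsEst Φ Λ y)) ≤ l2 (Φ.mulVec x2) + l2 v := by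
    rw [hdecomp]
    calc l2 ((Φ.mulVec x2 - Pm (Φ.mulVec x2)) + -(Pm v))
        ≤ l2 (Φ.mulVec x2 - Pm (Φ.mulVec x2)) + l2 (-(Pm v)) := l2_triangle _ _
      _ ≤ l2 (Φ.mulVec x2) + l2 v := by
          rw [l2_neg]
          exact add_le_add (hP'le _) (hPle _)
  -- sparsity facts
  have hsx2 : Sparse K x2 := by
    unfold Sparse
    calc (Finset.univ.filter (fun i => x2 i ≠ 0)).card ≤ (T \ Λ).card := by
          apply Finset.card_le_card
          intro i hi
          simp only [mem_filter, mem_univ, true_and] at hi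
          by_contra h
          exact hi (hx2supp i h)
      _ ≤ T.card := Finset.card_le_card (Finset.sdiff_subset)
      _ = K := hT
  have hse : Sparse (2 * K) (x - lsEst Φ Λ y) := by
    unfold Sparse
    calc (Finset.univ.filter (fun i => (x - lsEst Φ Λ y) i ≠ 0)).card ≤ (T ∪ Λ).card := by
          apply Finset.card_le_card
          intro i hi
          simp only [mem_filter, mem_univ, true_and, Pi.sub_apply] at hi
          by_contra h
          rw [Finset.mem_union] at h
          push_neg at h
          have h1 : x i = 0 := hsupp i h.1
          have h2 : lsEst Φ Λ y i = 0 := by simp [lsEst, h.2]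
          rw [h1, h2] at hi; exact hi (by ring)
      _ ≤ T.card + Λ.card := Finset.card_union_le _ _
      _ = 2 * K := by rw [hT, hΛcard]; ring
  -- RIP applications
  have hRe := (hRIP2K _ hse).1
  have hRx2 := (hRIPK x2 hsx2).2
  -- l2 of x2 equals l2 of the restriction
  have hl2x2 : l2 x2 = l2 (restr x (T \ Λ)) := by
    rw [l2_restr_of_supp x2 (T \ Λ) hx2supp]
    congr 1
    funext i
    have hiΛ : i.1 ∉ Λ := (Finset.mem_sdiff.mp i.2).2
    simp [restr, hx2, hx1, extd, hiΛ]
  -- final arithmetic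
  set s := Real.sqrt (1 - δ2K) with hsdef
  have hspos : 0 < s := Real.sqrt_pos.mpr (by linarith)
  have hs2 : s ^ 2 = 1 - δ2K := Real.sq_sqrt (by linarith)
  set E := l2 (x - lsEst Φ Λ y)
  set F := l2 (Φ.mulVec (x - lsEst Φ Λ y))
  set C := l2 (Φ.mulVec x2)
  set a := l2 (restr x (T \ Λ))
  set b := l2 v
  have hE0 : 0 ≤ E := l2_nonneg _
  have hF0 : 0 ≤ F := l2_nonneg _
  have hC0 : 0 ≤ C := l2_nonneg _
  have ha0 : 0 ≤ a := l2_nonneg _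
  have hb0 : 0 ≤ b := l2_nonneg _
  rw [hl2x2] at hRx2
  have h1 : E * s ≤ F := by
    have hsq : (E * s) ^ 2 ≤ F ^ 2 := by rw [mul_pow, hs2]; nlinarith
    exact (pow_le_pow_iff_left₀ (by positivity) hF0 two_ne_zero).mp hsq
  have h2 : C ≤ (1 + 2 * δ2K) * a := by
    have hsq : C ^ 2 ≤ ((1 + 2 * δ2K) * a) ^ 2 := by
      nlinarith [sq_nonneg a, mul_nonneg hδ2K0 (sq_nonneg a),
        mul_nonneg (mul_nonneg hδ2K0 hδ2K0) (sq_nonneg a)]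
    exact (pow_le_pow_iff_left₀ hC0 (by positivity) two_ne_zero).mp hsq
  rw [le_div_iff₀ (mul_pos (by linarith) hspos)]
  have h3 : E * s ≤ (1 + 2 * δ2K) * a + b := by linarith
  have h4 : E * ((1 - δK) * s) = (E * s) * (1 - δK) := by ring
  rw [h4]
  nlinarith [mul_le_mul_of_nonneg_right h3 (by linarith : (0:ℝ) ≤ 1 - δK),
    mul_nonneg (mul_nonneg hδK0 hδ2K0) ha0]
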